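/- In the group ℤ generated by {a, a⁻¹}, the singleton set {0} is a rational subset (indeed its set of reduced representatives {ε} is regular), but it is not a VPL^∀ set: its full preimage π⁻¹(0) ⊆ {a, a⁻¹}* is not a visibly pushdown language for any partition of the alphabet. -/

import Mathlib

inductive VKind | call | internal | response
deriving DecidableEq

/-- A (nondeterministic) visibly pushdown automaton over alphabet `A`
partitioned by `kind` into call, internal and response letters. -/
structure VPA (A : Type) (kind : A → VKind) where
  Q : Type
  Γ : Type
  [finQ : Fintype Q]
  [finΓ : Fintype Γ]
  init : Q
  accept : Set Q
  /-- transitions on call letters: push one symbol, do not inspect the stack -/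
  δc : Q → A → Set (Q × Γ)
  /-- transitions on internal letters: do not inspect or modify the stack -/
  δi : Q → A → Set Q
  /-- transitions on response letters: pop the topmost stack symbol -/
  δr : Q → A → Γ → Set Q
  /-- transitions on response letters read on the empty stack (bottom symbol) -/
  δb : Q → A → Set Q

namespace VPA

variable {A : Type} {kind : A → VKind}

inductive Steps (M : VPA A kind) : M.Q × List M.Γ → List A → M.Q × List M.Γ → Prop
  | nil (c) : Steps M c [] c
  | call {q s a q' γ w c} : kind a = .call → (q', γ) ∈ M.δc q a →
      Steps M (q', γ :: s) w c → Steps M (q, s) (a :: w) c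
  | internal {q s a q' w c} : kind a = .internal → q' ∈ M.δi q a →
      Steps M (q', s) w c → Steps M (q, s) (a :: w) c
  | pop {q γ s a q' w c} : kind a = .response → q' ∈ M.δr q a γ →
      Steps M (q', s) w c → Steps M (q, γ :: s) (a :: w) c
  | popEmpty {q a q' w c} : kind a = .response → q' ∈ M.δb q a →
      Steps M (q', []) w c → Steps M (q, []) (a :: w) c

/-- A VPA accepts a word if reading it from the initial state with empty stack
can end in an accepting state (with arbitrary stack contents). -/
def Accepts (M : VPA A kind) (w : List A) : Prop :=
  ∃ c : M.Q × List M.Γ, M.Steps (M.init, []) w c ∧ c.1 ∈ M.accept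

end VPA

/-- `L` is a visibly pushdown language over the partition `kind`. -/
def IsVPL {A : Type} (kind : A → VKind) (L : Set (List A)) : Prop :=
  ∃ M : VPA A kind, L = {w | M.Accepts w}

inductive ZA | a | ainv
deriving DecidableEq

/-- The projection of words over {a, a⁻¹} onto ℤ. -/
def projZ (w : List ZA) : ℤ :=
  (w.map (fun l => match l with | ZA.a => (1 : ℤ) | ZA.ainv => (-1 : ℤ))).sum


namespace VPA

variable {A : Type} {kind : A → VKind}

/-- abstract state-only steps, pretending responses happen on the empty stack -/
inductive SS (M : VPA A kind) : M.Q → List A → M.Q → Prop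
  | nil (q) : SS M q [] q
  | call {q a q' γ w q''} : kind a = .call → (q', γ) ∈ M.δc q a →
      SS M q' w q'' → SS M q (a :: w) q''
  | internal {q a q' w q''} : kind a = .internal → q' ∈ M.δi q a →
      SS M q' w q'' → SS M q (a :: w) q''
  | resp {q a q' w q''} : kind a = .response → q' ∈ M.δb q a →
      SS M q' w q'' → SS M q (a :: w) q''

theorem steps_append {M : VPA A kind} {c c'} {u : List A}
    (h1 : M.Steps c u c') : ∀ {v c''}, M.Steps c' v c'' → M.Steps c (u ++ v) c'' := by
  induction h1 with
  | nil => exact fun h2 => h2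
  | call h hδ _ ih => exact fun h2 => .call h hδ (ih h2)
  | internal h hδ _ ih => exact fun h2 => .internal h hδ (ih h2)
  | pop h hδ _ ih => exact fun h2 => .pop h hδ (ih h2)
  | popEmpty h hδ _ ih => exact fun h2 => .popEmpty h hδ (ih h2)

theorem steps_split {M : VPA A kind} {u : List A} :
    ∀ {c c'' : M.Q × List M.Γ} {v : List A}, M.Steps c (u ++ v) c'' →
      ∃ c', M.Steps c u c' ∧ M.Steps c' v c'' := by
  induction u with
  | nil => exact fun h => ⟨_, .nil _, h⟩
  | cons a u ih =>
    intro c c'' v h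
    cases h with
    | call h hδ hs => obtain ⟨c', h1, h2⟩ := ih hs; exact ⟨c', .call h hδ h1, h2⟩
    | internal h hδ hs => obtain ⟨c', h1, h2⟩ := ih hs; exact ⟨c', .internal h hδ h1, h2⟩
    | pop h hδ hs => obtain ⟨c', h1, h2⟩ := ih hs; exact ⟨c', .pop h hδ h1, h2⟩
    | popEmpty h hδ hs => obtain ⟨c', h1, h2⟩ := ih hs; exact ⟨c', .popEmpty h hδ h1, h2⟩

theorem ss_append {M : VPA A kind} {q q'} {u : List A}
    (h1 : M.SS q u q') : ∀ {v q''}, M.SS q' v q'' → M.SS q (u ++ v) q'' := by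
  induction h1 with
  | nil => exact fun h2 => h2
  | call h hδ _ ih => exact fun h2 => .call h hδ (ih h2)
  | internal h hδ _ ih => exact fun h2 => .internal h hδ (ih h2)
  | resp h hδ _ ih => exact fun h2 => .resp h hδ (ih h2)

theorem ss_split {M : VPA A kind} {u : List A} :
    ∀ {q q'' : M.Q} {v : List A}, M.SS q (u ++ v) q'' →
      ∃ q', M.SS q u q' ∧ M.SS q' v q'' := by
  induction u with
  | nil => exact fun h => ⟨_, .nil _, h⟩
  | cons a u ih =>
    intro q q'' v h
    cases h with
    | call h hδ hs => obtain ⟨q', h1, h2⟩ := ih hs; exact ⟨q', .call h hδ h1, h2⟩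
    | internal h hδ hs => obtain ⟨q', h1, h2⟩ := ih hs; exact ⟨q', .internal h hδ h1, h2⟩
    | resp h hδ hs => obtain ⟨q', h1, h2⟩ := ih hs; exact ⟨q', .resp h hδ h1, h2⟩

theorem ss_of_steps_noresp {M : VPA A kind} {c c'} {w : List A}
    (h : M.Steps c w c') : (∀ l ∈ w, kind l ≠ .response) → M.SS c.1 w c'.1 := by
  induction h with
  | nil => exact fun _ => .nil _
  | call h hδ _ ih => exact fun hw => .call h hδ (ih fun l hl => hw l (.tail _ hl))
  | internal h hδ _ ih => exact fun hw => .internal h hδ (ih fun l hl => hw l (.tail _ hl))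
  | pop h hδ _ _ => exact fun hw => absurd h (hw _ List.mem_cons_self)
  | popEmpty h hδ _ _ => exact fun hw => absurd h (hw _ List.mem_cons_self)

theorem steps_of_ss_noresp {M : VPA A kind} {q q'} {w : List A}
    (h : M.SS q w q') : (∀ l ∈ w, kind l ≠ .response) →
      ∀ s, ∃ s', M.Steps (q, s) w (q', s') := by
  induction h with
  | nil => exact fun _ s => ⟨s, .nil _⟩
  | @call q a q1 γ w q'' h hδ _ ih =>
    intro hw s
    obtain ⟨s', hs⟩ := ih (fun l hl => hw l (.tail _ hl)) (γ :: s)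
    exact ⟨s', .call h hδ hs⟩
  | internal h hδ _ ih =>
    intro hw s
    obtain ⟨s', hs⟩ := ih (fun l hl => hw l (.tail _ hl)) s
    exact ⟨s', .internal h hδ hs⟩
  | resp h _ _ _ => exact fun hw => absurd h (hw _ List.mem_cons_self)

theorem ss_of_steps_nocall {M : VPA A kind} {c c'} {w : List A}
    (h : M.Steps c w c') : (∀ l ∈ w, kind l ≠ .call) → c.2 = [] →
      M.SS c.1 w c'.1 ∧ c'.2 = [] := by
  induction h with
  | nil => exact fun _ hs => ⟨.nil _, hs⟩
  | call h _ _ _ => exact fun hw _ => absurd h (hw _ List.mem_cons_self)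
  | internal h hδ _ ih =>
    intro hw hs
    obtain ⟨h1, h2⟩ := ih (fun l hl => hw l (.tail _ hl)) hs
    exact ⟨.internal h hδ h1, h2⟩
  | pop _ _ _ _ => exact fun _ hs => absurd hs (List.cons_ne_nil _ _)
  | popEmpty h hδ _ ih =>
    intro hw _
    obtain ⟨h1, h2⟩ := ih (fun l hl => hw l (.tail _ hl)) rfl
    exact ⟨.resp h hδ h1, h2⟩

theorem steps_of_ss_nocall {M : VPA A kind} {q q'} {w : List A}
    (h : M.SS q w q') : (∀ l ∈ w, kind l ≠ .call) → M.Steps (q, []) w (q', []) := by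
  induction h with
  | nil => exact fun _ => .nil _
  | call h _ _ _ => exact fun hw => absurd h (hw _ List.mem_cons_self)
  | internal h hδ _ ih => exact fun hw => .internal h hδ (ih fun l hl => hw l (.tail _ hl))
  | resp h hδ _ ih => exact fun hw => .popEmpty h hδ (ih fun l hl => hw l (.tail _ hl))

theorem accepts_iff_ss {M : VPA A kind} {x y : A}
    (hk : ¬(kind x = .call ∧ kind y = .response)) (m n : ℕ) :
    M.Accepts (List.replicate m x ++ List.replicate n y) ↔
      ∃ q ∈ M.accept, M.SS M.init (List.replicate m x ++ List.replicate n y) q := by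
  have hmx : ∀ l ∈ List.replicate m x, l = x := fun l hl => List.eq_of_mem_replicate hl
  have hny : ∀ l ∈ List.replicate n y, l = y := fun l hl => List.eq_of_mem_replicate hl
  by_cases hy : kind y = .response
  · -- all letters non-call
    have hx : kind x ≠ .call := fun h => hk ⟨h, hy⟩
    have hnc : ∀ l ∈ List.replicate m x ++ List.replicate n y, kind l ≠ .call := by
      intro l hl
      rcases List.mem_append.1 hl with h | h
      · rw [hmx l h]; exact hx
      · rw [hny l h, hy]; simp
    constructor
    · rintro ⟨c, hs, hacc⟩
      obtain ⟨h1, _⟩ := ss_of_steps_nocall hs hnc rfl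
      exact ⟨c.1, hacc, h1⟩
    · rintro ⟨q, hq, hss⟩
      exact ⟨(q, []), steps_of_ss_nocall hss hnc, hq⟩
  · by_cases hx : kind x = .response
    · -- x response (non-call), y non-response: split
      constructor
      · rintro ⟨c, hs, hacc⟩
        obtain ⟨c1, h1, h2⟩ := steps_split hs
        obtain ⟨hs1, hc1⟩ := ss_of_steps_nocall h1
          (fun l hl => by rw [hmx l hl, hx]; simp) rfl
        have hc1' : c1 = (c1.1, []) := Prod.ext rfl hc1
        rw [hc1'] at h2
        have hs2 := ss_of_steps_noresp h2 (fun l hl => by rw [hny l hl]; exact hy)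
        exact ⟨c.1, hacc, ss_append hs1 hs2⟩
      · rintro ⟨q, hq, hss⟩
        obtain ⟨q1, h1, h2⟩ := ss_split hss
        have hst1 := steps_of_ss_nocall h1 (fun l hl => by rw [hmx l hl, hx]; simp)
        obtain ⟨s', hst2⟩ := steps_of_ss_noresp h2
          (fun l hl => by rw [hny l hl]; exact hy) []
        exact ⟨(q, s'), steps_append hst1 hst2, hq⟩
    · -- no response letters at all
      have hnr : ∀ l ∈ List.replicate m x ++ List.replicate n y, kind l ≠ .response := by
        intro l hl
        rcases List.mem_append.1 hl with h | h
        · rw [hmx l h]; exact hx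
        · rw [hny l h]; exact hy
      constructor
      · rintro ⟨c, hs, hacc⟩
        exact ⟨c.1, hacc, ss_of_steps_noresp hs hnr⟩
      · rintro ⟨q, hq, hss⟩
        obtain ⟨s', hst⟩ := steps_of_ss_noresp hss hnr []
        exact ⟨(q, s'), hst, hq⟩

end VPA

theorem projZ_rep (x y : ZA) (hxy : x ≠ y) (m n : ℕ) :
    projZ (List.replicate m x ++ List.replicate n y) = 0 ↔ m = n := by
  cases x <;> cases y <;>
    simp_all [projZ, List.map_replicate, List.sum_replicate, nsmul_eq_mul] <;> omega

def emptyDFA : DFA ZA Bool := ⟨fun _ _ => false, true, {true}⟩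

theorem emptyDFA_accepts : emptyDFA.accepts = ({[]} : Language ZA) := by
  have hfalse : ∀ w : List ZA, emptyDFA.evalFrom false w = false := by
    intro w; induction w with
    | nil => rfl
    | cons a w ih => simpa [DFA.evalFrom, emptyDFA] using ih
  ext w
  cases w with
  | nil => simp [DFA.mem_accepts, DFA.eval, emptyDFA]; rfl
  | cons a w =>
    have heval : emptyDFA.eval (a :: w) = false := by
      simp [DFA.eval, DFA.evalFrom, emptyDFA, hfalse w]
      exact hfalse w
    rw [DFA.mem_accepts]
    rw [heval]
    simp only [emptyDFA, Set.mem_singleton_iff]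
    constructor
    · intro h; exact absurd h Bool.false_ne_true
    · intro h; exact absurd h (List.cons_ne_nil a w)

theorem not_vpl_key {kind : ZA → VKind} (x y : ZA) (hxy : x ≠ y)
    (hk : ¬(kind x = .call ∧ kind y = .response)) :
    ¬ IsVPL kind (projZ ⁻¹' {0}) := by
  rintro ⟨M, hM⟩
  haveI := M.finQ
  have hmem : ∀ w, M.Accepts w ↔ projZ w = 0 := by
    intro w
    simpa using (Set.ext_iff.1 hM w).symm
  obtain ⟨m, m', hne, hR⟩ := Finite.exists_ne_map_eq_of_infinite
    (fun m : ℕ => {q | M.SS M.init (List.replicate m x) q})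
  have h1 : M.Accepts (List.replicate m x ++ List.replicate m y) :=
    (hmem _).2 ((projZ_rep x y hxy m m).2 rfl)
  obtain ⟨q, hq, hss⟩ := (VPA.accepts_iff_ss hk m m).1 h1
  obtain ⟨q1, ha1, ha2⟩ := VPA.ss_split hss
  have hq1' : M.SS M.init (List.replicate m' x) q1 := (Set.ext_iff.1 hR q1).1 ha1
  have h2 : M.Accepts (List.replicate m' x ++ List.replicate m y) :=
    (VPA.accepts_iff_ss hk m' m).2 ⟨q, hq, VPA.ss_append hq1' ha2⟩
  exact hne ((projZ_rep x y hxy m' m).1 ((hmem _).1 h2)).symm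

/-- In ℤ = ⟨a⟩, the set {0} is rational — its set of reduced representatives
{ε} is regular — but its full preimage (the word problem of ℤ) is not a VPL
for any partition of the alphabet, so {0} is not a VPL^∀ set. -/
theorem zero_rational_but_not_VPLforall :
    (Language.IsRegular ({[]} : Language ZA) ∧ projZ '' {([] : List ZA)} = {0}) ∧
    (∀ kind : ZA → VKind, ¬ IsVPL kind (projZ ⁻¹' {0})) := by
  refine ⟨⟨⟨Bool, inferInstance, emptyDFA, emptyDFA_accepts⟩, by simp [projZ]⟩, ?_⟩
  intro kind
  by_cases h : kind ZA.a = .call ∧ kind ZA.ainv = .response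
  · exact not_vpl_key ZA.ainv ZA.a (by decide)
      (fun h' => absurd (h.1.symm.trans h'.2) (by decide))
  · exact not_vpl_key ZA.a ZA.ainv (by decide) h
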